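/- Let ρ : [0,1] → ℝ be a nonnegative integrable function and let 0 < M ≤ K be constants with M ≤ ∫₀¹ ρ(x) dx ≤ K. Then every v ∈ C¹([0,1]) satisfies sup_{x∈[0,1]} |v(x)| ≤ (K/M) (∫₀¹ (v'(x))² dx)^{1/2} + (1/M) |∫₀¹ ρ(x) v(x) dx|. -/

import Mathlib

open Real MeasureTheory Set

/-- Lemma 1.4 (i): if `ρ ≥ 0` is integrable on `[0,1]` with
`0 < M ≤ ∫₀¹ ρ ≤ K`, then every `v ∈ C¹([0,1])` satisfies
`sup_{[0,1]} |v| ≤ (K/M) ‖v'‖_{L²(0,1)} + (1/M) |∫₀¹ ρ v|`. -/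
theorem stmt0 (ρ v : ℝ → ℝ) (M K : ℝ) (hM : 0 < M) (hMK : M ≤ K)
    (hρ_nonneg : ∀ x ∈ Set.Icc (0:ℝ) 1, 0 ≤ ρ x)
    (hρ_int : IntervalIntegrable ρ MeasureTheory.volume 0 1)
    (hmass_low : M ≤ ∫ x in (0:ℝ)..1, ρ x)
    (hmass_up : (∫ x in (0:ℝ)..1, ρ x) ≤ K)
    (hv : ContDiffOn ℝ 1 v (Set.Icc 0 1)) :
    ∀ x ∈ Set.Icc (0:ℝ) 1,
      |v x| ≤ (K / M) * Real.sqrt (∫ y in (0:ℝ)..1, (derivWithin v (Set.Icc 0 1) y) ^ 2)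
        + (1 / M) * |∫ y in (0:ℝ)..1, ρ y * v y| := by
  set g : ℝ → ℝ := derivWithin v (Set.Icc 0 1) with hg
  have huIcc : uIcc (0:ℝ) 1 = Icc (0:ℝ) 1 := uIcc_of_le zero_le_one
  have hvcont : ContinuousOn v (Icc (0:ℝ) 1) := hv.continuousOn
  have hgcont : ContinuousOn g (Icc (0:ℝ) 1) :=
    hv.continuousOn_derivWithin (uniqueDiffOn_Icc zero_lt_one) le_rfl
  have hdiff : ∀ t ∈ Ioo (0:ℝ) 1, HasDerivAt v (g t) t := by
    intro t ht
    have hmem : Icc (0:ℝ) 1 ∈ nhds t := Icc_mem_nhds ht.1 ht.2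
    have hd : DifferentiableWithinAt ℝ v (Icc (0:ℝ) 1) t :=
      hv.differentiableOn one_ne_zero t (Ioo_subset_Icc_self ht)
    exact hd.hasDerivWithinAt.hasDerivAt hmem
  have hg_int : IntervalIntegrable g volume 0 1 := by
    apply ContinuousOn.intervalIntegrable
    rw [huIcc]; exact hgcont
  have habs_int : IntervalIntegrable (fun t => |g t|) volume 0 1 := hg_int.abs
  have hftc : ∀ a ∈ Icc (0:ℝ) 1, ∀ b ∈ Icc (0:ℝ) 1, a ≤ b →
      (∫ t in a..b, g t) = v b - v a := by
    intro a ha b hb hab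
    apply intervalIntegral.integral_eq_sub_of_hasDeriv_right_of_le hab
    · exact hvcont.mono (Icc_subset_Icc ha.1 hb.2)
    · intro t ht
      exact (hdiff t ⟨lt_of_le_of_lt ha.1 ht.1, lt_of_lt_of_le ht.2 hb.2⟩).hasDerivWithinAt
    · apply ContinuousOn.intervalIntegrable
      exact hgcont.mono (by rw [uIcc_of_le hab]; exact Icc_subset_Icc ha.1 hb.2)
  set A : ℝ := ∫ t in (0:ℝ)..1, |g t| with hA
  have hA0 : 0 ≤ A :=
    intervalIntegral.integral_nonneg zero_le_one (fun t _ => abs_nonneg _)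
  have hL1 : ∀ a ∈ Icc (0:ℝ) 1, ∀ b ∈ Icc (0:ℝ) 1, a ≤ b → |∫ t in a..b, g t| ≤ A := by
    intro a ha b hb hab
    calc |∫ t in a..b, g t| ≤ ∫ t in a..b, |g t| :=
          intervalIntegral.abs_integral_le_integral_abs hab
      _ ≤ A := by
          apply intervalIntegral.integral_mono_interval ha.1 hab hb.2
          · exact Filter.Eventually.of_forall (fun t => abs_nonneg _)
          · exact habs_int
  have hbound : ∀ x ∈ Icc (0:ℝ) 1, ∀ y ∈ Icc (0:ℝ) 1, |v x - v y| ≤ A := by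
    intro x hx y hy
    rcases le_total y x with h | h
    · rw [← hftc y hy x hx h]; exact hL1 y hy x hx h
    · rw [abs_sub_comm, ← hftc x hx y hy h]; exact hL1 x hx y hy h
  -- Cauchy–Schwarz on [0,1]: A ≤ sqrt (∫ g²)
  set C : ℝ := Real.sqrt (∫ t in (0:ℝ)..1, g t ^ 2) with hC
  have hC0 : 0 ≤ C := Real.sqrt_nonneg _
  have hg2_int : IntervalIntegrable (fun t => g t ^ 2) volume 0 1 := by
    apply ContinuousOn.intervalIntegrable
    rw [huIcc]; exact hgcont.pow 2
  have hexp : (∫ t in (0:ℝ)..1, (|g t| - A) ^ 2)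
      = (∫ t in (0:ℝ)..1, g t ^ 2) - A ^ 2 := by
    have heq : ∀ t ∈ uIcc (0:ℝ) 1, (|g t| - A) ^ 2 = g t ^ 2 - (2 * A) * |g t| + A ^ 2 := by
      intro t _
      have : |g t| ^ 2 = g t ^ 2 := sq_abs _
      nlinarith [this]
    rw [intervalIntegral.integral_congr heq]
    rw [intervalIntegral.integral_add (hg2_int.sub (habs_int.const_mul (2 * A)))
        intervalIntegrable_const,
      intervalIntegral.integral_sub hg2_int (habs_int.const_mul (2 * A)),
      intervalIntegral.integral_const_mul, intervalIntegral.integral_const]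
    simp [← hA]
    ring
  have hAC : A ≤ C := by
    have hnn : 0 ≤ ∫ t in (0:ℝ)..1, (|g t| - A) ^ 2 :=
      intervalIntegral.integral_nonneg zero_le_one (fun t _ => sq_nonneg _)
    have hsq : A ^ 2 ≤ ∫ t in (0:ℝ)..1, g t ^ 2 := by linarith [hexp ▸ hnn]
    have hg2nn : 0 ≤ ∫ t in (0:ℝ)..1, g t ^ 2 :=
      intervalIntegral.integral_nonneg zero_le_one (fun t _ => sq_nonneg _)
    rw [hC]
    exact (Real.le_sqrt hA0 hg2nn).mpr hsq
  -- main argument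
  intro x hx
  set I : ℝ := ∫ y in (0:ℝ)..1, ρ y with hI
  have hI0 : 0 < I := lt_of_lt_of_le hM hmass_low
  have hρv_int : IntervalIntegrable (fun y => ρ y * v y) volume 0 1 :=
    hρ_int.mul_continuousOn (by rw [huIcc]; exact hvcont)
  have hρd_int : IntervalIntegrable (fun y => ρ y * (v x - v y)) volume 0 1 :=
    hρ_int.mul_continuousOn (by rw [huIcc]; exact continuousOn_const.sub hvcont)
  have hsplit : I * v x = (∫ y in (0:ℝ)..1, ρ y * v y)
      + ∫ y in (0:ℝ)..1, ρ y * (v x - v y) := by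
    rw [← intervalIntegral.integral_add hρv_int hρd_int]
    have : ∀ y ∈ uIcc (0:ℝ) 1, ρ y * v y + ρ y * (v x - v y) = ρ y * v x := by
      intro y _; ring
    rw [intervalIntegral.integral_congr this, intervalIntegral.integral_mul_const]
  have hd_bound : |∫ y in (0:ℝ)..1, ρ y * (v x - v y)| ≤ K * C := by
    calc |∫ y in (0:ℝ)..1, ρ y * (v x - v y)|
        ≤ ∫ y in (0:ℝ)..1, |ρ y * (v x - v y)| :=
          intervalIntegral.abs_integral_le_integral_abs zero_le_one
      _ ≤ ∫ y in (0:ℝ)..1, ρ y * C := by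
          apply intervalIntegral.integral_mono_on zero_le_one hρd_int.abs
            (hρ_int.mul_const C)
          intro y hy
          rw [abs_mul, abs_of_nonneg (hρ_nonneg y hy)]
          exact mul_le_mul_of_nonneg_left ((hbound x hx y hy).trans hAC) (hρ_nonneg y hy)
      _ = I * C := by rw [intervalIntegral.integral_mul_const]
      _ ≤ K * C := mul_le_mul_of_nonneg_right hmass_up hC0
  set B : ℝ := |∫ y in (0:ℝ)..1, ρ y * v y| with hB
  have hmain : M * |v x| ≤ K * C + B := by
    have h1 : M * |v x| ≤ I * |v x| :=
      mul_le_mul_of_nonneg_right hmass_low (abs_nonneg _)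
    have h2 : I * |v x| = |I * v x| := by
      rw [abs_mul, abs_of_nonneg hI0.le]
    have h3 : |I * v x| ≤ B + K * C := by
      rw [hsplit]
      exact (abs_add_le _ _).trans (by gcongr)
    linarith
  have hfin : |v x| ≤ (K * C + B) / M := by
    rw [le_div_iff₀ hM]; linarith
  have heq : (K * C + B) / M = K / M * C + 1 / M * B := by ring
  linarith [heq ▸ hfin]
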